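/- arXiv:2412.01870 — 2 statements merged into one kernel-verified Lean document; each statement's English description precedes it below -/
import Mathlib

section
/- Suppose F : ℂ → ℂ is holomorphic on an open set D. Then for a + bρ + cρ² ∈ A₃ with a ∈ D and a closed rectifiable contour γ in D winding once around a, one has (1/(2πi)) ∮_γ F(t)(t − (a + bρ + cρ²))⁻¹ dt = F(a) + bF′(a)ρ + (cF′(a) + (b²/2)F″(a))ρ². -/
noncomputable section

/-- The commutative algebra `A₃ = ℂ[ρ]/(ρ³)`, with basis `{1, ρ, ρ²}`;
an element `⟨a, b, c⟩` represents `a + b·ρ + c·ρ²`. -/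
@[ext] structure A3 : Type where
  a : ℂ
  b : ℂ
  c : ℂ

namespace A3

instance : Zero A3 := ⟨⟨0, 0, 0⟩⟩
instance : One A3 := ⟨⟨1, 0, 0⟩⟩
instance : Add A3 := ⟨fun x y => ⟨x.a + y.a, x.b + y.b, x.c + y.c⟩⟩
instance : Neg A3 := ⟨fun x => ⟨-x.a, -x.b, -x.c⟩⟩
instance : Mul A3 :=
  ⟨fun x y => ⟨x.a * y.a, x.a * y.b + x.b * y.a, x.a * y.c + x.b * y.b + x.c * y.a⟩⟩

@[simp] lemma zero_a : (0 : A3).a = 0 := rfl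
@[simp] lemma zero_b : (0 : A3).b = 0 := rfl
@[simp] lemma zero_c : (0 : A3).c = 0 := rfl
@[simp] lemma one_a : (1 : A3).a = 1 := rfl
@[simp] lemma one_b : (1 : A3).b = 0 := rfl
@[simp] lemma one_c : (1 : A3).c = 0 := rfl
@[simp] lemma add_a (x y : A3) : (x + y).a = x.a + y.a := rfl
@[simp] lemma add_b (x y : A3) : (x + y).b = x.b + y.b := rfl
@[simp] lemma add_c (x y : A3) : (x + y).c = x.c + y.c := rfl
@[simp] lemma neg_a (x : A3) : (-x).a = -x.a := rfl
@[simp] lemma neg_b (x : A3) : (-x).b = -x.b := rfl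
@[simp] lemma neg_c (x : A3) : (-x).c = -x.c := rfl
@[simp] lemma mul_a (x y : A3) : (x * y).a = x.a * y.a := rfl
@[simp] lemma mul_b (x y : A3) : (x * y).b = x.a * y.b + x.b * y.a := rfl
@[simp] lemma mul_c (x y : A3) : (x * y).c = x.a * y.c + x.b * y.b + x.c * y.a := rfl

instance : CommRing A3 where
  add_assoc x y z := by ext <;> simp <;> ring
  zero_add x := by ext <;> simp
  add_zero x := by ext <;> simp
  add_comm x y := by ext <;> simp <;> ring
  neg_add_cancel x := by ext <;> simp
  left_distrib x y z := by ext <;> simp <;> ring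
  right_distrib x y z := by ext <;> simp <;> ring
  zero_mul x := by ext <;> simp
  mul_zero x := by ext <;> simp
  mul_assoc x y z := by ext <;> simp <;> ring
  one_mul x := by ext <;> simp
  mul_one x := by ext <;> simp
  mul_comm x y := by ext <;> simp <;> ring
  nsmul := fun n x => ⟨n • x.a, n • x.b, n • x.c⟩
  nsmul_zero x := by ext <;> exact zero_nsmul _
  nsmul_succ n x := by ext <;> exact succ_nsmul _ _
  zsmul := fun n x => ⟨n • x.a, n • x.b, n • x.c⟩
  zsmul_zero' x := by ext <;> exact zero_zsmul _
  zsmul_succ' n x := by ext <;> exact SubNegMonoid.zsmul_succ' _ _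
  zsmul_neg' n x := by ext <;> exact SubNegMonoid.zsmul_neg' _ _

/-- The canonical embedding `ℂ → A₃`. -/
def toA3 : ℂ →+* A3 where
  toFun r := ⟨r, 0, 0⟩
  map_one' := rfl
  map_mul' x y := by ext <;> simp
  map_zero' := rfl
  map_add' x y := by ext <;> simp

instance : Algebra ℂ A3 := toA3.toAlgebra
instance : Algebra ℝ A3 := (toA3.comp (algebraMap ℝ ℂ)).toAlgebra

@[simp] lemma smulC_a (r : ℂ) (x : A3) : (r • x).a = r * x.a := by
  show (toA3 r * x).a = _ ; simp [toA3]
@[simp] lemma smulC_b (r : ℂ) (x : A3) : (r • x).b = r * x.b := by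
  show (toA3 r * x).b = _ ; simp [toA3]
@[simp] lemma smulC_c (r : ℂ) (x : A3) : (r • x).c = r * x.c := by
  show (toA3 r * x).c = _ ; simp [toA3]
@[simp] lemma smulR_a (r : ℝ) (x : A3) : (r • x).a = (r : ℂ) * x.a := by
  show ((toA3.comp (algebraMap ℝ ℂ)) r * x).a = _ ; simp [toA3]
@[simp] lemma smulR_b (r : ℝ) (x : A3) : (r • x).b = (r : ℂ) * x.b := by
  show ((toA3.comp (algebraMap ℝ ℂ)) r * x).b = _ ; simp [toA3]
@[simp] lemma smulR_c (r : ℝ) (x : A3) : (r • x).c = (r : ℂ) * x.c := by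
  show ((toA3.comp (algebraMap ℝ ℂ)) r * x).c = _ ; simp [toA3]

/-- The nilpotent generator `ρ`. -/
def ρ : A3 := ⟨0, 1, 0⟩

lemma rho_sq : ρ ^ 2 = ⟨0, 0, 1⟩ := by ext <;> simp [ρ, sq]
lemma rho_cubed : ρ ^ 3 = 0 := by ext <;> simp [ρ, pow_succ, sq]

/-- The element `a + b·ρ + c·ρ²` of `A₃`. -/
def el (a b c : ℂ) : A3 := algebraMap ℂ A3 a + b • ρ + c • ρ ^ 2

lemma el_def (a b c : ℂ) : el a b c = ⟨a, b, c⟩ := by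
  simp only [el, rho_sq]; ext <;> simp [ρ] <;> simp [Algebra.algebraMap_eq_smul_one, toA3]

/-- The Euclidean norm `‖a + bρ + cρ²‖ = √(|a|² + |b|² + |c|²)`. -/
def nrm (x : A3) : ℝ :=
  Real.sqrt (‖x.a‖ ^ 2 + ‖x.b‖ ^ 2 + ‖x.c‖ ^ 2)

/-- The topology of `A₃` (that of the Euclidean norm, i.e. of `ℂ³`). -/
instance : TopologicalSpace A3 :=
  TopologicalSpace.induced (fun x => (x.a, x.b, x.c)) inferInstance

/-- The functional `f(a + bρ + cρ²) = a`. -/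
def fl (x : A3) : ℂ := x.a

/-- The set `I = {λ₁ρ + λ₂ρ² : λ₁, λ₂ ∈ ℂ}`. -/
def Iset : Set A3 := {x | ∃ l₁ l₂ : ℂ, x = l₁ • ρ + l₂ • ρ ^ 2}

/-- The kernel of `f`, i.e. the ideal `I`, as a real subspace of `A₃`. -/
def Iker : Submodule ℝ A3 where
  carrier := {x | x.a = 0}
  add_mem' := by intro x y hx hy; simp_all [Set.mem_setOf_eq]
  zero_mem' := rfl
  smul_mem' := by intro r x hx; simp_all [Set.mem_setOf_eq]

/-- Componentwise contour integral over the circle `C(center, r)` of an `A₃`-valued function. -/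
def cInt (g : ℂ → A3) (center : ℂ) (r : ℝ) : A3 :=
  ⟨∮ z in C(center, r), (g z).a, ∮ z in C(center, r), (g z).b, ∮ z in C(center, r), (g z).c⟩

end A3

/-- Explicit formula for `Ring.inverse` in `A₃` when the constant term is nonzero. -/
lemma A3.ring_inverse_eq (t a b c : ℂ) (h : t ≠ a) :
    Ring.inverse (A3.toA3 t - A3.el a b c) =
      ⟨(t - a)⁻¹, b * ((t - a)⁻¹) ^ 2, c * ((t - a)⁻¹) ^ 2 + b ^ 2 * ((t - a)⁻¹) ^ 3⟩ := by
  have hta : (t - a) ≠ 0 := sub_ne_zero.2 h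
  have hx : A3.toA3 t - A3.el a b c = ⟨t - a, -b, -c⟩ := by
    rw [A3.el_def, sub_eq_add_neg]; ext <;> simp [A3.toA3, sub_eq_add_neg]
  set y : A3 := ⟨(t - a)⁻¹, b * ((t - a)⁻¹) ^ 2, c * ((t - a)⁻¹) ^ 2 + b ^ 2 * ((t - a)⁻¹) ^ 3⟩
    with hy
  have hmul : (A3.toA3 t - A3.el a b c) * y = 1 := by
    rw [hx]; ext <;> simp [hy] <;> field_simp <;> ring
  have hmul' : y * (A3.toA3 t - A3.el a b c) = 1 := by rw [mul_comm]; exact hmul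
  exact Ring.inverse_unit ⟨A3.toA3 t - A3.el a b c, y, hmul, hmul'⟩

lemma circleIntegral_add {E : Type*} [NormedAddCommGroup E] [NormedSpace ℂ E] {f g : ℂ → E}
    {c : ℂ} {R : ℝ} (hf : CircleIntegrable f c R) (hg : CircleIntegrable g c R) :
    (∮ z in C(c, R), (f z + g z)) = (∮ z in C(c, R), f z) + ∮ z in C(c, R), g z := by
  simp only [circleIntegral, smul_add, intervalIntegral.integral_add hf.out hg.out]

open Metric in
/-- the Cauchy-type integral of `F(t)(t − (a + bρ + cρ²))⁻¹` over a circle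
around `a` in `D` equals `F(a) + bF′(a)ρ + (cF′(a) + (b²/2)F″(a))ρ²`. -/
theorem stmt9 (D : Set ℂ) (hD : IsOpen D) (F : ℂ → ℂ) (hF : DifferentiableOn ℂ F D)
    (a b c : ℂ) (r : ℝ) (hr : 0 < r) (hball : Metric.closedBall a r ⊆ D) :
    (2 * Real.pi * Complex.I : ℂ)⁻¹ •
      A3.cInt (fun t => F t • Ring.inverse (A3.toA3 t - A3.el a b c)) a r =
    A3.el (F a) (b * deriv F a) (c * deriv F a + b ^ 2 / 2 * deriv (deriv F) a) := by
  set R : NNReal := ⟨r, hr.le⟩ with hRdef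
  have hF' : DifferentiableOn ℂ F (closedBall a (R : ℝ)) := hF.mono hball
  have hps : HasFPowerSeriesOnBall F (cauchyPowerSeries F a (R : ℝ)) a R :=
    hF'.hasFPowerSeriesOnBall (by exact_mod_cast hr)
  -- the key Cauchy formulas
  have key : ∀ n : ℕ, (Nat.factorial n : ℂ) * ((2 * Real.pi * Complex.I : ℂ)⁻¹ *
      ∮ z in C(a, r), ((z - a)⁻¹) ^ (n + 1) * F z) = iteratedDeriv n F a := by
    intro n
    have h1 := hps.factorial_smul (1 : ℂ) n
    have h2 := cauchyPowerSeries_apply F a r n 1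
    have h3 : (∮ z in C(a, r), (1 / (z - a)) ^ n • (z - a)⁻¹ • F z) =
        ∮ z in C(a, r), ((z - a)⁻¹) ^ (n + 1) * F z := by
      apply circleIntegral.integral_congr hr.le
      intro z _
      simp only [smul_eq_mul, one_div, pow_succ]
      ring
    rw [h3, smul_eq_mul] at h2
    rw [show ((R : ℝ)) = r from rfl] at h1
    rw [iteratedDeriv_eq_iteratedFDeriv]
    rw [← h1, h2]
    simp [nsmul_eq_mul]
  have key0 := key 0
  have key1 := key 1
  have key2 := key 2
  simp only [Nat.factorial, Nat.cast_one, Nat.cast_ofNat, one_mul, iteratedDeriv_zero,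
    iteratedDeriv_succ', iteratedDeriv_one] at key0 key1 key2
  -- points on the circle differ from the center
  have hsph : ∀ z ∈ sphere a r, z ≠ a := fun z hz hza => by
    rw [mem_sphere, hza, dist_self] at hz; exact hr.ne hz
  -- abbreviations for the three integrals
  set I1 : ℂ := ∮ z in C(a, r), ((z - a)⁻¹) ^ 1 * F z with hI1
  set I2 : ℂ := ∮ z in C(a, r), ((z - a)⁻¹) ^ 2 * F z with hI2
  set I3 : ℂ := ∮ z in C(a, r), ((z - a)⁻¹) ^ 3 * F z with hI3
  -- integrability of the integrands for `I2`, `I3`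
  have hFc : ContinuousOn F (sphere a r) :=
    hF.continuousOn.mono ((sphere_subset_closedBall).trans hball)
  have hinvc : ContinuousOn (fun z => (z - a)⁻¹) (sphere a r) := by
    apply ContinuousOn.inv₀
    · exact (continuous_id.sub continuous_const).continuousOn
    · exact fun z hz => sub_ne_zero.2 (hsph z hz)
  have hci : ∀ n : ℕ, CircleIntegrable (fun z => ((z - a)⁻¹) ^ n * F z) a r := fun n =>
    ContinuousOn.circleIntegrable hr.le ((hinvc.pow n).mul hFc)
  -- the integrand
  set g : ℂ → A3 := fun t => F t • Ring.inverse (A3.toA3 t - A3.el a b c) with hg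
  have ha' : (∮ z in C(a, r), (g z).a) = I1 := by
    apply circleIntegral.integral_congr hr.le
    intro z hz
    rw [hg]
    simp only [A3.smulC_a, A3.ring_inverse_eq z a b c (hsph z hz)]
    ring
  have hb' : (∮ z in C(a, r), (g z).b) = b * I2 := by
    rw [hI2, ← circleIntegral.integral_const_mul]
    apply circleIntegral.integral_congr hr.le
    intro z hz
    rw [hg]
    simp only [A3.smulC_b, A3.ring_inverse_eq z a b c (hsph z hz)]
    ring
  have hc' : (∮ z in C(a, r), (g z).c) = c * I2 + b ^ 2 * I3 := by
    have h4 : (∮ z in C(a, r), (g z).c) =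
        ∮ z in C(a, r), (c * (((z - a)⁻¹) ^ 2 * F z) + b ^ 2 * (((z - a)⁻¹) ^ 3 * F z)) := by
      apply circleIntegral.integral_congr hr.le
      intro z hz
      rw [hg]
      simp only [A3.smulC_c, A3.ring_inverse_eq z a b c (hsph z hz)]
      ring
    have hi2 : CircleIntegrable (fun z => c * (((z - a)⁻¹) ^ 2 * F z)) a r :=
      ContinuousOn.circleIntegrable hr.le (continuousOn_const.mul ((hinvc.pow 2).mul hFc))
    have hi3 : CircleIntegrable (fun z => b ^ 2 * (((z - a)⁻¹) ^ 3 * F z)) a r :=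
      ContinuousOn.circleIntegrable hr.le (continuousOn_const.mul ((hinvc.pow 3).mul hFc))
    rw [h4, circleIntegral_add hi2 hi3,
      circleIntegral.integral_const_mul, circleIntegral.integral_const_mul, hI2, hI3]
  -- assemble
  have hcInt_a : (A3.cInt g a r).a = ∮ z in C(a, r), (g z).a := rfl
  have hcInt_b : (A3.cInt g a r).b = ∮ z in C(a, r), (g z).b := rfl
  have hcInt_c : (A3.cInt g a r).c = ∮ z in C(a, r), (g z).c := rfl
  rw [A3.el_def]
  ext
  · rw [A3.smulC_a, hcInt_a, ha', ← key0]
  · rw [A3.smulC_b, hcInt_b, hb', ← key1]; ring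
  · rw [A3.smulC_c, hcInt_c, hc', ← key1, ← key2]; ring

end
end

section
/- Let D ⊆ ℂ be open, F : D → ℂ holomorphic, and define Φ : {(x, b, c) : x ∈ D, b, c ∈ ℂ} → A₃ by Φ(x + bρ + cρ²) = F(x) + bF′(x)ρ + (cF′(x) + (b²/2)F″(x))ρ². Then for every ζ with f(ζ) ∈ D and every h ∈ A₃, the Gâteaux limit lim_{δ→0⁺} (Φ(ζ + δh) − Φ(ζ))/δ exists and equals h·Φ′(ζ), where Φ′ is defined by the same formula with F replaced by F′. -/
noncomputable section

open Filter in
private lemma tendsto_slope_Ioi' {g : ℝ → ℂ} {L : ℂ} (H : HasDerivAt g L 0) :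
    Tendsto (fun δ : ℝ => (↑δ⁻¹ : ℂ) * (g δ - g 0)) (nhdsWithin 0 (Set.Ioi 0)) (nhds L) := by
  have T := (hasDerivAt_iff_tendsto_slope.mp H).mono_left
    (nhdsWithin_mono _ fun x hx => ne_of_gt hx)
  refine T.congr fun δ => ?_
  simp [slope, Complex.real_smul]

private lemma hasDerivAt_affine' (a p : ℂ) :
    HasDerivAt (fun δ : ℝ => a + ↑δ * p) p 0 := by
  simpa using ((Complex.ofRealCLM.hasDerivAt (x := (0:ℝ))).mul_const p).const_add a

private lemma hasDerivAt_comp_affine' {G : ℂ → ℂ} {G' a : ℂ} (p : ℂ) (h1 : HasDerivAt G G' a) :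
    HasDerivAt (fun δ : ℝ => G (a + ↑δ * p)) (p * G') 0 := by
  have h1' : HasDerivAt G G' ((fun δ : ℝ => a + ↑δ * p) 0) := by simpa using h1
  simpa [Function.comp_def, smul_eq_mul] using h1'.scomp (0:ℝ) (hasDerivAt_affine' a p)

@[simp] private lemma A3.sub_a (x y : A3) : (x - y).a = x.a - y.a := rfl
@[simp] private lemma A3.sub_b (x y : A3) : (x - y).b = x.b - y.b := rfl
@[simp] private lemma A3.sub_c (x y : A3) : (x - y).c = x.c - y.c := rfl

open Filter in
private lemma A3.tendsto_components {α : Type*} {l : Filter α} {f : α → A3} {x : A3}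
    (h1 : Tendsto (fun t => (f t).a) l (nhds x.a))
    (h2 : Tendsto (fun t => (f t).b) l (nhds x.b))
    (h3 : Tendsto (fun t => (f t).c) l (nhds x.c)) :
    Tendsto f l (nhds x) := by
  rw [show (A3.instTopologicalSpace : TopologicalSpace A3) =
      TopologicalSpace.induced (fun x : A3 => (x.a, x.b, x.c)) inferInstance from rfl,
    nhds_induced, Filter.tendsto_comap_iff]
  exact (h1.prodMk_nhds (h2.prodMk_nhds h3))

/-- the main extension `Φ` of a holomorphic `F` has a Gâteaux derivative
`Φ′` (given by the same formula with `F` replaced by `F′`) at every point over `D`. -/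
theorem stmt10 (D : Set ℂ) (hD : IsOpen D) (F : ℂ → ℂ) (hF : DifferentiableOn ℂ F D)
    (Φ Φ' : A3 → A3)
    (hΦ : ∀ ζ : A3, Φ ζ =
      A3.el (F ζ.a) (ζ.b * deriv F ζ.a)
        (ζ.c * deriv F ζ.a + ζ.b ^ 2 / 2 * deriv (deriv F) ζ.a))
    (hΦ' : ∀ ζ : A3, Φ' ζ =
      A3.el (deriv F ζ.a) (ζ.b * deriv (deriv F) ζ.a)
        (ζ.c * deriv (deriv F) ζ.a + ζ.b ^ 2 / 2 * deriv (deriv (deriv F)) ζ.a)) :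
    ∀ ζ : A3, A3.fl ζ ∈ D → ∀ h : A3,
      Filter.Tendsto (fun δ : ℝ => δ⁻¹ • (Φ (ζ + δ • h) - Φ ζ))
        (nhdsWithin 0 (Set.Ioi 0)) (nhds (h * Φ' ζ)) := by
  intro ζ hζ h
  have ha : ζ.a ∈ D := hζ
  have A0 : AnalyticOnNhd ℂ F D := hF.analyticOnNhd hD
  have hF1 : HasDerivAt F (deriv F ζ.a) ζ.a := (A0 ζ.a ha).differentiableAt.hasDerivAt
  have hF2 : HasDerivAt (deriv F) (deriv (deriv F) ζ.a) ζ.a :=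
    (A0.deriv ζ.a ha).differentiableAt.hasDerivAt
  have hF3 : HasDerivAt (deriv (deriv F)) (deriv (deriv (deriv F)) ζ.a) ζ.a :=
    (A0.deriv.deriv ζ.a ha).differentiableAt.hasDerivAt
  set a := ζ.a; set b := ζ.b; set c := ζ.c
  set p := h.a; set q := h.b; set r := h.c
  refine A3.tendsto_components ?_ ?_ ?_
  · have Ha : HasDerivAt (fun δ : ℝ => F (a + ↑δ * p)) (p * deriv F a) 0 :=
      hasDerivAt_comp_affine' p hF1
    have T := tendsto_slope_Ioi' Ha
    have hv : (h * Φ' ζ).a = p * deriv F a := by simp [hΦ', A3.el_def]; try ring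
    rw [hv]
    refine T.congr fun δ => ?_
    simp [hΦ, A3.el_def, a, p]
  · have Hb : HasDerivAt (fun δ : ℝ => (b + ↑δ * q) * deriv F (a + ↑δ * p))
        (q * deriv F a + b * (p * deriv (deriv F) a)) 0 := by
      simpa [Pi.mul_def] using (hasDerivAt_affine' b q).mul (hasDerivAt_comp_affine' p hF2)
    have T := tendsto_slope_Ioi' Hb
    have hv : (h * Φ' ζ).b = q * deriv F a + b * (p * deriv (deriv F) a) := by
      simp [hΦ', A3.el_def]; try ring
    rw [hv]
    refine T.congr fun δ => ?_
    simp [hΦ, A3.el_def, a, b, c, p, q, r]; try ring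
  · have Hc : HasDerivAt (fun δ : ℝ =>
          (c + ↑δ * r) * deriv F (a + ↑δ * p)
            + (b + ↑δ * q) ^ 2 / 2 * deriv (deriv F) (a + ↑δ * p))
        (r * deriv F a + c * (p * deriv (deriv F) a)
          + (b * q * deriv (deriv F) a + b ^ 2 / 2 * (p * deriv (deriv (deriv F)) a))) 0 := by
      have h1 := (hasDerivAt_affine' c r).mul (hasDerivAt_comp_affine' p hF2)
      have h2 : HasDerivAt (fun δ : ℝ => (b + ↑δ * q) ^ 2 / 2)
          ((q * (b + ↑(0:ℝ) * q) + (b + ↑(0:ℝ) * q) * q) / 2) 0 := by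
        simpa [pow_two] using
          ((hasDerivAt_affine' b q).mul (hasDerivAt_affine' b q)).div_const 2
      have h3 := h2.mul (hasDerivAt_comp_affine' p hF3)
      have h4 := h1.add h3
      simp only [Pi.mul_def, Pi.add_def] at h4
      convert h4 using 1
      case e'_4 => rfl
      push_cast
      ring_nf
    have T := tendsto_slope_Ioi' Hc
    have hv : (h * Φ' ζ).c = r * deriv F a + c * (p * deriv (deriv F) a)
        + (b * q * deriv (deriv F) a + b ^ 2 / 2 * (p * deriv (deriv (deriv F)) a)) := by
      simp [hΦ', A3.el_def]; try ring
    rw [hv]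
    refine T.congr fun δ => ?_
    simp [hΦ, A3.el_def, a, b, c, p, q, r]; try ring
end
end
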